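/- Let a > 1, R > 0, b̄ > 0, η > 0, β > 0, D1 > 0 and D0 ≥ 0 be real constants, and define f(α) = (α/(η·(a − 1)·β))·(2^(R/(b̄·α)) − 1) + D0·a + D1·α·a for α ∈ (0, ∞). Then for every α > 0, the derivative of f at α vanishes if and only if (x − 1)·exp(x − 1) = (D1·η·a·(a − 1)·β − 1)/e, where x = R·(log 2)/(b̄·α) and e = exp 1. -/

import Mathlib

/-- Equation (15): the derivative of the single-user total power with respect to the
number of PRBs `α` vanishes iff `(x − 1)·e^(x − 1) = (D1·η·a·(a − 1)·β − 1)/e`, where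
`x = R·log 2/(b̄·α)` — i.e. the Lambert-W characterization of the optimal PRB count. -/
theorem optimal_number_of_prbs_deriv
    (a R bbar η β D1 D0 : ℝ)
    (ha : 1 < a) (hR : 0 < R) (hb : 0 < bbar) (hη : 0 < η) (hβ : 0 < β)
    (hD1 : 0 < D1) (hD0 : 0 ≤ D0) :
    ∀ α : ℝ, 0 < α →
      (deriv (fun α : ℝ =>
          (α / (η * (a - 1) * β)) * ((2 : ℝ) ^ (R / (bbar * α)) - 1)
            + D0 * a + D1 * α * a) α = 0 ↔
        (R * Real.log 2 / (bbar * α) - 1)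
            * Real.exp (R * Real.log 2 / (bbar * α) - 1)
          = (D1 * η * a * (a - 1) * β - 1) / Real.exp 1) := by
  intro α hα
  set K : ℝ := η * (a - 1) * β with hKdef
  have hK : 0 < K := by
    have : 0 < a - 1 := by linarith
    positivity
  set c : ℝ := R * Real.log 2 / bbar with hcdef
  have hfun : (fun α : ℝ =>
      (α / (η * (a - 1) * β)) * ((2 : ℝ) ^ (R / (bbar * α)) - 1)
        + D0 * a + D1 * α * a)
      = fun t : ℝ => (t / K) * (Real.exp (c / t) - 1) + D0 * a + D1 * t * a := by
    funext t
    have h2 : (2 : ℝ) ^ (R / (bbar * t)) = Real.exp (c / t) := by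
      rw [Real.rpow_def_of_pos (by norm_num : (0:ℝ) < 2)]
      congr 1
      rw [hcdef]
      ring
    rw [h2, hKdef]
  rw [hfun]
  have h1 : HasDerivAt (fun t : ℝ => c / t) ((0 * α - c * 1) / α ^ 2) α :=
    (hasDerivAt_const α c).div (hasDerivAt_id α) hα.ne'
  have h2 := h1.exp
  have h3 : HasDerivAt (fun t : ℝ => t / K) (1 / K) α := (hasDerivAt_id α).div_const K
  have h4 := h3.mul (h2.sub_const 1)
  have h5 := (h4.add_const (D0 * a)).add (((hasDerivAt_id α).const_mul D1).mul_const a)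
  simp only [id_eq] at h5
  rw [show deriv (fun t : ℝ => t / K * (Real.exp (c / t) - 1) + D0 * a + D1 * t * a) α = 1 / K * (Real.exp (c / α) - 1) + α / K * (Real.exp (c / α) * ((0 * α - c * 1) / α ^ 2)) + D1 * 1 * a from h5.deriv]
  have hx : R * Real.log 2 / (bbar * α) = c / α := by rw [hcdef]; ring
  rw [hx, Real.exp_sub]
  have he : (0:ℝ) < Real.exp 1 := Real.exp_pos 1
  have hαne : α ≠ 0 := hα.ne'
  set E : ℝ := Real.exp (c / α) with hE
  have hKα : K * α ≠ 0 := mul_ne_zero hK.ne' hαne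
  constructor
  · intro h
    field_simp at h ⊢
    have h' : (E - 1) * α - E * c + D1 * a * K * α = 0 := by
      apply mul_left_cancel₀ hKα
      linear_combination (K * α) * h
    linear_combination (-1) * h' + D1 * a * α * hKdef
  · intro h
    field_simp at h ⊢
    have h' : (c - α) * E = (D1 * η * a * (a - 1) * β - 1) * α := by
      apply mul_right_cancel₀ he.ne'
      linear_combination Real.exp 1 * h
    linear_combination (-1) * h' + D1 * a * α * hKdef
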